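/- Let Q be a stochastic kernel from X to Y with Dobrushin coefficient δ(Q), and let μ, ν be two probability measures on X. Then the total variation distance between the induced observation distributions satisfies ‖Qμ − Qν‖_TV ≤ (1 − δ(Q))·‖μ − ν‖_TV, where (Qμ)(B) = ∫ Q(B|x) μ(dx). -/

import Mathlib

open MeasureTheory ProbabilityTheory

/-- Total variation distance `‖μ−ν‖_TV = 2 sup_A |μ(A) − ν(A)|`. -/
noncomputable def tvDist {X : Type*} [MeasurableSpace X] (μ ν : Measure X) : ℝ :=
  2 * ⨆ A : {A : Set X // MeasurableSet A}, |(μ A.1).toReal - (ν A.1).toReal|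

/-- Dobrushin coefficient of a kernel `Q`:
`δ(Q) = inf Σᵢ min(Q(x, Aᵢ), Q(y, Aᵢ))`, infimum over all `x, y` and all finite
measurable partitions `{Aᵢ}` of `Y`. -/
noncomputable def dobrushin {X Y : Type*} [MeasurableSpace X] [MeasurableSpace Y]
    (Q : Kernel X Y) : ℝ :=
  sInf {r : ℝ | ∃ (x y : X) (n : ℕ) (A : Fin n → Set Y),
    (∀ i, MeasurableSet (A i)) ∧ Pairwise (Function.onFun Disjoint A) ∧
    (⋃ i, A i) = Set.univ ∧
    r = ∑ i, min ((Q x) (A i)).toReal ((Q y) (A i)).toReal}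

section Aux

variable {X Y : Type*} [MeasurableSpace X] [MeasurableSpace Y]

lemma dobrushin_bddBelow (Q : Kernel X Y) :
    BddBelow {r : ℝ | ∃ (x y : X) (n : ℕ) (A : Fin n → Set Y),
      (∀ i, MeasurableSet (A i)) ∧ Pairwise (Function.onFun Disjoint A) ∧
      (⋃ i, A i) = Set.univ ∧
      r = ∑ i, min ((Q x) (A i)).toReal ((Q y) (A i)).toReal} := by
  refine ⟨0, ?_⟩
  rintro r ⟨x, y, n, A, -, -, -, rfl⟩
  exact Finset.sum_nonneg fun i _ => le_min ENNReal.toReal_nonneg ENNReal.toReal_nonneg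

lemma dobrushin_nonneg (Q : Kernel X Y) : 0 ≤ dobrushin Q := by
  by_cases h : {r : ℝ | ∃ (x y : X) (n : ℕ) (A : Fin n → Set Y),
      (∀ i, MeasurableSet (A i)) ∧ Pairwise (Function.onFun Disjoint A) ∧
      (⋃ i, A i) = Set.univ ∧
      r = ∑ i, min ((Q x) (A i)).toReal ((Q y) (A i)).toReal} = ∅
  · rw [dobrushin, h, Real.sInf_empty]
  · exact le_csInf (Set.nonempty_iff_ne_empty.2 h) (by
      rintro r ⟨x, y, n, A, -, -, -, rfl⟩
      exact Finset.sum_nonneg fun i _ => le_min ENNReal.toReal_nonneg ENNReal.toReal_nonneg)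

lemma dobrushin_le_one [Nonempty X] (Q : Kernel X Y) [IsMarkovKernel Q] :
    dobrushin Q ≤ 1 := by
  obtain ⟨x⟩ := ‹Nonempty X›
  refine csInf_le (dobrushin_bddBelow Q) ?_
  refine ⟨x, x, 1, fun _ => Set.univ, fun _ => MeasurableSet.univ,
    Subsingleton.pairwise, by simp [Set.iUnion_const], ?_⟩
  simp [measure_univ]

lemma toReal_prob_le_one {Z : Type*} [MeasurableSpace Z] (κ : Measure Z)
    [IsProbabilityMeasure κ] (s : Set Z) : (κ s).toReal ≤ 1 := by
  simpa using ENNReal.toReal_mono ENNReal.one_ne_top (prob_le_one (μ := κ) (s := s))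

lemma toReal_prob_compl {Z : Type*} [MeasurableSpace Z] (κ : Measure Z)
    [IsProbabilityMeasure κ] {s : Set Z} (hs : MeasurableSet s) :
    (κ sᶜ).toReal = 1 - (κ s).toReal := by
  rw [measure_compl hs (measure_ne_top _ _), measure_univ,
    ENNReal.toReal_sub_of_le prob_le_one ENNReal.one_ne_top, ENNReal.toReal_one]

lemma dobrushin_key (Q : Kernel X Y) [IsMarkovKernel Q] (x y : X) {B : Set Y}
    (hB : MeasurableSet B) :
    ((Q x) B).toReal - ((Q y) B).toReal ≤ 1 - dobrushin Q := by
  have hmem : dobrushin Q ≤ min ((Q x) B).toReal ((Q y) B).toReal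
      + min ((Q x) Bᶜ).toReal ((Q y) Bᶜ).toReal := by
    refine csInf_le (dobrushin_bddBelow Q) ?_
    refine ⟨x, y, 2, ![B, Bᶜ], ?_, ?_, ?_, ?_⟩
    · intro i; fin_cases i <;> simp [hB, hB.compl]
    · intro i j hij
      fin_cases i <;> fin_cases j <;>
        simp_all [Function.onFun, disjoint_compl_right, disjoint_compl_left]
    · ext z; simp [Fin.exists_fin_two]; tauto
    · simp [Fin.sum_univ_two]
  have hx := toReal_prob_compl (Q x) hB
  have hy := toReal_prob_compl (Q y) hB
  have h1 : min ((Q x) B).toReal ((Q y) B).toReal ≤ ((Q y) B).toReal := min_le_right _ _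
  have h2 : min ((Q x) Bᶜ).toReal ((Q y) Bᶜ).toReal ≤ ((Q x) Bᶜ).toReal := min_le_left _ _
  linarith

end Aux

section Core

variable {X Y : Type*} [MeasurableSpace X] [MeasurableSpace Y]

lemma core_bound (Q : Kernel X Y) [IsMarkovKernel Q] (μ ν : Measure X)
    [IsProbabilityMeasure μ] [IsProbabilityMeasure ν]
    {S : Set X} (hS : MeasurableSet S)
    (hpos : ∀ t, MeasurableSet t → t ⊆ S → ν t ≤ μ t)
    (hneg : ∀ t, MeasurableSet t → t ⊆ Sᶜ → μ t ≤ ν t)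
    {B : Set Y} (hB : MeasurableSet B) :
    ((μ.bind (fun x => Q x)) B).toReal - ((ν.bind (fun x => Q x)) B).toReal ≤
      (1 - dobrushin Q) * ((μ S).toReal - (ν S).toReal) := by
  have hX : Nonempty X := by
    by_contra h
    rw [not_nonempty_iff] at h
    have h0 : μ Set.univ = 0 := by
      rw [Set.univ_eq_empty_iff.2 h]; exact measure_empty
    rw [measure_univ] at h0; exact one_ne_zero h0
  set f : X → ℝ := fun x => ((Q x) B).toReal with hf
  have hfmeas : Measurable f := (Q.measurable_coe hB).ennreal_toReal
  have hf0 : ∀ x, 0 ≤ f x := fun x => ENNReal.toReal_nonneg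
  have hf1 : ∀ x, f x ≤ 1 := fun x => toReal_prob_le_one (Q x) B
  have hfint : ∀ (κ : Measure X) [IsFiniteMeasure κ], Integrable f κ := by
    intro κ _
    refine (integrable_const (1 : ℝ)).mono' hfmeas.aestronglyMeasurable
      (Filter.Eventually.of_forall fun x => ?_)
    rw [Real.norm_eq_abs, abs_of_nonneg (hf0 x)]; exact hf1 x
  -- bind as integral
  have hbind : ∀ (κ : Measure X) [IsProbabilityMeasure κ],
      ((κ.bind (fun x => Q x)) B).toReal = ∫ x, f x ∂κ := by
    intro κ _
    rw [Measure.bind_apply hB (Q.measurable.aemeasurable),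
      ← integral_toReal ((Q.measurable_coe hB).aemeasurable)
        (Filter.Eventually.of_forall fun x => measure_lt_top _ _)]
  -- the two difference measures
  have hle1 : ν.restrict S ≤ μ.restrict S := by
    rw [Measure.le_iff]
    intro s hs
    rw [Measure.restrict_apply hs, Measure.restrict_apply hs]
    exact hpos _ (hs.inter hS) Set.inter_subset_right
  have hle2 : μ.restrict Sᶜ ≤ ν.restrict Sᶜ := by
    rw [Measure.le_iff]
    intro s hs
    rw [Measure.restrict_apply hs, Measure.restrict_apply hs]
    exact hneg _ (hs.inter hS.compl) Set.inter_subset_right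
  set a : Measure X := μ.restrict S - ν.restrict S with ha
  set b : Measure X := ν.restrict Sᶜ - μ.restrict Sᶜ with hb
  have hafin : IsFiniteMeasure a := isFiniteMeasure_of_le (μ.restrict S) Measure.sub_le
  have hbfin : IsFiniteMeasure b := isFiniteMeasure_of_le (ν.restrict Sᶜ) Measure.sub_le
  have hadd1 : a + ν.restrict S = μ.restrict S := Measure.sub_add_cancel_of_le hle1
  have hadd2 : b + μ.restrict Sᶜ = ν.restrict Sᶜ := Measure.sub_add_cancel_of_le hle2
  -- masses
  have hνS : ν S ≤ μ S := hpos S hS subset_rfl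
  set m : ℝ := (μ S).toReal - (ν S).toReal with hm
  have hauniv : (a Set.univ).toReal = m := by
    rw [ha, Measure.sub_apply MeasurableSet.univ hle1, Measure.restrict_apply_univ,
      Measure.restrict_apply_univ, ENNReal.toReal_sub_of_le hνS (measure_ne_top _ _)]
  have hbuniv : (b Set.univ).toReal = m := by
    have hμSc : μ Sᶜ ≤ ν Sᶜ := hneg Sᶜ hS.compl subset_rfl
    rw [hb, Measure.sub_apply MeasurableSet.univ hle2, Measure.restrict_apply_univ,
      Measure.restrict_apply_univ, ENNReal.toReal_sub_of_le hμSc (measure_ne_top _ _),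
      toReal_prob_compl μ hS, toReal_prob_compl ν hS]
    ring
  -- integral decompositions
  have hμdec : ∫ x, f x ∂μ = ∫ x, f x ∂a + ∫ x, f x ∂(ν.restrict S)
      + ∫ x, f x ∂(μ.restrict Sᶜ) := by
    conv_lhs => rw [← Measure.restrict_add_restrict_compl (μ := μ) hS]
    rw [integral_add_measure (hfint _) (hfint _), ← hadd1,
      integral_add_measure (hfint _) (hfint _)]
  have hνdec : ∫ x, f x ∂ν = ∫ x, f x ∂b + ∫ x, f x ∂(ν.restrict S)
      + ∫ x, f x ∂(μ.restrict Sᶜ) := by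
    conv_lhs => rw [← Measure.restrict_add_restrict_compl (μ := ν) hS]
    rw [integral_add_measure (hfint _) (hfint _), ← hadd2,
      integral_add_measure (hfint _) (hfint _)]
    ring
  -- infimum of f
  set β : ℝ := ⨅ x, f x with hβ
  have hbdd : BddBelow (Set.range f) := ⟨0, by rintro _ ⟨x, rfl⟩; exact hf0 x⟩
  have hβle : ∀ x, β ≤ f x := fun x => ciInf_le hbdd x
  have hub : ∀ x, f x ≤ β + (1 - dobrushin Q) := by
    intro x
    have h := le_ciInf (fun y => by
      have := dobrushin_key Q x y hB
      simp only [hf]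
      linarith : ∀ y, f x - (1 - dobrushin Q) ≤ f y)
    linarith [h]
  -- integral bounds
  have hInt1 : ∫ x, f x ∂a ≤ (β + (1 - dobrushin Q)) * m := by
    calc ∫ x, f x ∂a ≤ ∫ _x, (β + (1 - dobrushin Q)) ∂a :=
          integral_mono (hfint a) (integrable_const _) hub
      _ = (β + (1 - dobrushin Q)) * m := by
          rw [integral_const, smul_eq_mul, measureReal_def, hauniv, mul_comm]
  have hInt2 : β * m ≤ ∫ x, f x ∂b := by
    calc β * m = ∫ _x, β ∂b := by rw [integral_const, smul_eq_mul, measureReal_def, hbuniv, mul_comm]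
      _ ≤ ∫ x, f x ∂b := integral_mono (integrable_const _) (hfint b) hβle
  have hkey : (β + (1 - dobrushin Q)) * m - β * m = (1 - dobrushin Q) * m := by ring
  rw [hbind μ, hbind ν, hμdec, hνdec]
  linarith

end Core

/-- Dobrushin contraction: `‖Qμ − Qν‖_TV ≤ (1 − δ(Q))·‖μ − ν‖_TV`,
where `(Qμ)(B) = ∫ Q(B|x) μ(dx)`. -/
theorem tv_bind_le_dobrushin {X Y : Type*} [MeasurableSpace X] [MeasurableSpace Y]
    (Q : Kernel X Y) [IsMarkovKernel Q] (μ ν : Measure X)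
    [IsProbabilityMeasure μ] [IsProbabilityMeasure ν] :
    tvDist (μ.bind (fun x => Q x)) (ν.bind (fun x => Q x)) ≤
      (1 - dobrushin Q) * tvDist μ ν := by
  have hX : Nonempty X := by
    by_contra h
    rw [not_nonempty_iff] at h
    have h0 : μ Set.univ = 0 := by
      rw [Set.univ_eq_empty_iff.2 h]; exact measure_empty
    rw [measure_univ] at h0; exact one_ne_zero h0
  have hδ : 0 ≤ 1 - dobrushin Q := by linarith [dobrushin_le_one (X := X) Q]
  obtain ⟨S, hS, hpos, hneg⟩ := hahn_decomposition (μ := μ) (ν := ν)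
  set m : ℝ := (μ S).toReal - (ν S).toReal with hm
  have hm0 : 0 ≤ m := by
    have := ENNReal.toReal_mono (measure_ne_top μ S) (hpos S hS subset_rfl)
    linarith
  -- Qμ, Qν are probability measures
  have hPb : ∀ (κ : Measure X) [IsProbabilityMeasure κ],
      IsProbabilityMeasure (κ.bind (fun x => Q x)) := by
    intro κ _
    constructor
    rw [Measure.bind_apply MeasurableSet.univ Q.measurable.aemeasurable]
    simp [measure_univ]
  have hPμ := hPb μ
  have hPν := hPb ν
  -- each set difference bounded
  have hsup : ∀ A : {A : Set Y // MeasurableSet A},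
      |((μ.bind (fun x => Q x)) A.1).toReal - ((ν.bind (fun x => Q x)) A.1).toReal|
        ≤ (1 - dobrushin Q) * m := by
    rintro ⟨B, hB⟩
    show |((μ.bind fun x => Q x) B).toReal - ((ν.bind fun x => Q x) B).toReal| ≤ _
    rw [abs_sub_le_iff]
    refine ⟨core_bound Q μ ν hS hpos hneg hB, ?_⟩
    have h2 := core_bound Q μ ν hS hpos hneg hB.compl
    rw [toReal_prob_compl _ hB, toReal_prob_compl _ hB] at h2
    rw [hm]
    linarith
  -- bound the LHS
  have hL : tvDist (μ.bind (fun x => Q x)) (ν.bind (fun x => Q x))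
      ≤ 2 * ((1 - dobrushin Q) * m) := by
    rw [tvDist]
    have : Nonempty {A : Set Y // MeasurableSet A} := ⟨⟨Set.univ, MeasurableSet.univ⟩⟩
    exact mul_le_mul_of_nonneg_left (ciSup_le hsup) (by norm_num)
  -- lower bound the RHS
  have hbddA : BddAbove (Set.range fun A : {A : Set X // MeasurableSet A} =>
      |(μ A.1).toReal - (ν A.1).toReal|) := by
    refine ⟨2, ?_⟩
    rintro _ ⟨A, rfl⟩
    have h1 := toReal_prob_le_one μ A.1
    have h2 := toReal_prob_le_one ν A.1
    have h3 : (0:ℝ) ≤ (μ A.1).toReal := ENNReal.toReal_nonneg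
    have h4 : (0:ℝ) ≤ (ν A.1).toReal := ENNReal.toReal_nonneg
    rw [abs_le]; constructor <;> linarith
  have hR : 2 * m ≤ tvDist μ ν := by
    rw [tvDist]
    have hmem : m ≤ ⨆ A : {A : Set X // MeasurableSet A},
        |(μ A.1).toReal - (ν A.1).toReal| := by
      have := le_ciSup hbddA (⟨S, hS⟩ : {A : Set X // MeasurableSet A})
      rw [← abs_of_nonneg hm0] at *
      exact le_trans (le_of_eq rfl) this
    linarith
  calc tvDist (μ.bind (fun x => Q x)) (ν.bind (fun x => Q x))
      ≤ 2 * ((1 - dobrushin Q) * m) := hL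
    _ = (1 - dobrushin Q) * (2 * m) := by ring
    _ ≤ (1 - dobrushin Q) * tvDist μ ν := mul_le_mul_of_nonneg_left hR hδ
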